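/- Let e = 2m with m ≥ 1 and suppose s divides m. Then ψ_3(0) = ((p-1)^2/2) p^{e+m-3} if m/s ≡ 1 (mod 2), and ψ_3(0) = ((p-1)^2/2) p^{e+m+s-3} if m/s ≡ 0 (mod 2). -/

import Mathlib

open scoped BigOperators

noncomputable section

/-- The primitive `p`-th root of unity `ζ_p = exp(2πi/p)`. -/
def zetaP (p : ℕ) : ℂ := Complex.exp (2 * Real.pi * Complex.I / p)

/-- The absolute trace map from `F_q = GF(p^e)` onto `F_p`. -/
def tr (p e : ℕ) [Fact p.Prime] (x : GaloisField p e) : ZMod p :=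
  Algebra.trace (ZMod p) (GaloisField p e) x

/-- The Weil sum `S(α, β) = Σ_{x ∈ F_q} ζ_p^{Tr(α x^{p^l+1} + β x)}`. -/
def weilSum (p e l : ℕ) [Fact p.Prime] (α β : GaloisField p e) : ℂ :=
  letI : Fintype (GaloisField p e) := Fintype.ofFinite _
  ∑ x : GaloisField p e, zetaP p ^ (tr p e (α * x ^ (p ^ l + 1) + β * x)).val

/- The quadratic character `η` of `F_p`, integer-valued:
`η(0) = 0`, `η(x) = 1` for nonzero squares, `η(x) = -1` for nonsquares. -/
open Classical in
def eta (p : ℕ) (x : ZMod p) : ℤ :=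
  if x = 0 then 0 else if IsSquare x then 1 else -1

/- The cyclotomic classes of order 2 in `F_p^*`: `cyc p 0` is the set of nonzero
squares `C_0^{(2,p)}`, and `cyc p 1` is the set of nonsquares `C_1^{(2,p)}`. -/
open Classical in
def cyc (p : ℕ) [Fact p.Prime] (i : ℕ) : Finset (ZMod p) :=
  Finset.univ.filter (fun x => x ≠ 0 ∧ (if i = 0 then IsSquare x else ¬ IsSquare x))

/-- `ψ_3(a) = ((p-1)/2) p^{e-3} Σ_{z1 ∈ F_p^*} ζ_p^{-z1} Σ_{z3 ∈ F_p^*} S(z1, a z3)`. -/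
def psi3 (p e l : ℕ) [Fact p.Prime] (a : GaloisField p e) : ℂ :=
  ((p : ℂ) - 1) / 2 * (p : ℂ) ^ ((e : ℤ) - 3) *
    ∑ z1 ∈ ({0}ᶜ : Finset (ZMod p)), zetaP p ^ (-z1).val *
      ∑ z3 ∈ ({0}ᶜ : Finset (ZMod p)),
        weilSum p e l (algebraMap (ZMod p) (GaloisField p e) z1)
          (a * algebraMap (ZMod p) (GaloisField p e) z3)

/-- `ψ_4^{(i)}(a, b) = p^{e-3} Σ_{c ∈ C_i} Σ_{z1 ∈ F_p^*} ζ_p^{-z1}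
      Σ_{z2 ∈ F_p^*} ζ_p^{-c z2} S(z1, -a b⁻¹ z2)`, for `b ∈ F_p^*`. -/
def psi4 (p e l : ℕ) [Fact p.Prime] (i : ℕ) (a : GaloisField p e) (b : ZMod p) : ℂ :=
  (p : ℂ) ^ ((e : ℤ) - 3) *
    ∑ c ∈ cyc p i, ∑ z1 ∈ ({0}ᶜ : Finset (ZMod p)), zetaP p ^ (-z1).val *
      ∑ z2 ∈ ({0}ᶜ : Finset (ZMod p)), zetaP p ^ (-(c * z2)).val *
        weilSum p e l (algebraMap (ZMod p) (GaloisField p e) z1)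
          (-a * algebraMap (ZMod p) (GaloisField p e) (b⁻¹ * z2))

/-- `T_i(a,b) = |{(x1,x2) ∈ F_q² : Tr(x1^{p^l+1}) = 1, Tr(x2) ∈ C_i, Tr(a x1 + b x2) = 0}|`. -/
def Tcount (p e l : ℕ) [Fact p.Prime] (i : ℕ) (a b : GaloisField p e) : ℕ :=
  Nat.card {x : GaloisField p e × GaloisField p e //
    tr p e (x.1 ^ (p ^ l + 1)) = 1 ∧ tr p e x.2 ∈ cyc p i ∧ tr p e (a * x.1 + b * x.2) = 0}

/-- The defining set `D_i = {(x1,x2) ∈ F_q² : Tr(x1^{p^l+1}) = 1, Tr(x2) ∈ C_i^{(2,p)}}`. -/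
def Dset (p e l : ℕ) [Fact p.Prime] (i : ℕ) : Set (GaloisField p e × GaloisField p e) :=
  {x | tr p e (x.1 ^ (p ^ l + 1)) = 1 ∧ tr p e x.2 ∈ cyc p i}

/-- The codeword of `C_{D_i}` indexed by `(a, b) ∈ F_q²`:
the vector `(Tr(a x1 + b x2))_{(x1,x2) ∈ D_i}`. -/
def codeword (p e l : ℕ) [Fact p.Prime] (i : ℕ) (a b : GaloisField p e) :
    Dset p e l i → ZMod p :=
  fun x => tr p e (a * x.1.1 + b * x.1.2)

/-- The linear code `C_{D_i} = {(Tr(a x1 + b x2))_{(x1,x2) ∈ D_i} : a, b ∈ F_q}`. -/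
def code (p e l : ℕ) [Fact p.Prime] (i : ℕ) : Set (Dset p e l i → ZMod p) :=
  Set.range (fun ab : GaloisField p e × GaloisField p e => codeword p e l i ab.1 ab.2)

/-- The Hamming weight of a vector: the number of nonzero coordinates. -/
def wt {ι : Type*} {p : ℕ} (c : ι → ZMod p) : ℕ := Nat.card {x : ι // c x ≠ 0}

namespace PsiAux


lemma sq_helper {a : ℕ} (ha : 1 ≤ a) : (a + 1) * (a - 1) = a ^ 2 - 1 := by
  have h2 : 1 ≤ a ^ 2 := Nat.one_le_pow _ _ ha
  zify [ha, h2]; ring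

lemma pow_add_one_dvd {x k : ℕ} (hx : 1 ≤ x) : x ^ k + 1 ∣ x ^ (2 * k) - 1 := by
  have h1 : 1 ≤ x ^ k := Nat.one_le_pow _ _ hx
  exact ⟨x ^ k - 1, by rw [two_mul, pow_add, ← sq, ← sq_helper h1]⟩

lemma dvd_pow_sub_one {x a b : ℕ} (h : a ∣ b) : x ^ a - 1 ∣ x ^ b - 1 := by
  obtain ⟨c, rfl⟩ := h
  calc x ^ a - 1 ∣ (x ^ a) ^ c - 1 ^ c := by simpa using Nat.sub_dvd_pow_sub_pow (x ^ a) 1 c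
  _ = x ^ (a * c) - 1 := by rw [pow_mul, one_pow]

lemma odd_dvd_pow_add_one {x a b : ℕ} (h : a ∣ b) (hodd : Odd (b / a)) :
    x ^ a + 1 ∣ x ^ b + 1 := by
  have := Odd.nat_add_dvd_pow_add_pow (x ^ a) 1 hodd
  rwa [← pow_mul, one_pow, Nat.mul_div_cancel' h] at this

lemma gcd_pow_sub_one (x : ℕ) (hx : 2 ≤ x) (a b : ℕ) :
    Nat.gcd (x ^ a - 1) (x ^ b - 1) = x ^ Nat.gcd a b - 1 := by
  rcases Nat.eq_zero_or_pos a with rfl | ha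
  · simp
  rcases Nat.eq_zero_or_pos b with rfl | hb
  · simp
  have hx1 : 1 ≤ x := by omega
  refine Nat.dvd_antisymm ?_ (Nat.dvd_gcd (dvd_pow_sub_one (Nat.gcd_dvd_left a b))
    (dvd_pow_sub_one (Nat.gcd_dvd_right a b)))
  set G := Nat.gcd (x ^ a - 1) (x ^ b - 1) with hG
  have hcast : ∀ k : ℕ, G ∣ x ^ k - 1 → ((x : ZMod G)) ^ k = 1 := by
    intro k hdvd
    have h1 : 1 ≤ x ^ k := Nat.one_le_pow _ _ hx1
    have := (ZMod.natCast_eq_zero_iff _ _).mpr hdvd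
    rw [Nat.cast_sub h1] at this
    push_cast at this
    linear_combination this
  have h3 : ((x : ZMod G)) ^ Nat.gcd a b = 1 :=
    pow_gcd_eq_one.mpr ⟨hcast a (Nat.gcd_dvd_left _ _), hcast b (Nat.gcd_dvd_right _ _)⟩
  have h4 : 1 ≤ x ^ Nat.gcd a b := Nat.one_le_pow _ _ hx1
  rw [← ZMod.natCast_eq_zero_iff, Nat.cast_sub h4]
  push_cast
  linear_combination h3

/-- in a finite cyclic group, if `c ^ (n / gcd k n) = 1` then `c` is a `k`-th power. -/
lemma exists_pow_eq {G : Type*} [CommGroup G] [Finite G] [IsCyclic G] (k : ℕ) (c : G)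
    (hc : c ^ (Nat.card G / Nat.gcd k (Nat.card G)) = 1) : ∃ w : G, w ^ k = c := by
  obtain ⟨g, hg⟩ := IsCyclic.exists_generator (α := G)
  have hord : orderOf g = Nat.card G := orderOf_eq_card_of_forall_mem_zpowers hg
  have hn0 : 0 < Nat.card G := Nat.card_pos
  set n := Nat.card G with hn
  set d := Nat.gcd k n with hd
  have hdn : d ∣ n := Nat.gcd_dvd_right _ _
  have hdk : d ∣ k := Nat.gcd_dvd_left _ _
  have hd0 : 0 < d := Nat.gcd_pos_of_pos_right _ hn0
  obtain ⟨i, hi⟩ : c ∈ Submonoid.powers g := mem_powers_iff_mem_zpowers.2 (hg c)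
  simp only at hi
  have h1 : g ^ (i * (n / d)) = 1 := by rw [pow_mul, hi]; exact hc
  have h2 : n ∣ i * (n / d) := by
    have := orderOf_dvd_of_pow_eq_one h1
    rwa [hord] at this
  have h3 : d ∣ i := by
    have hnd : d * (n / d) = n := Nat.mul_div_cancel' hdn
    have hmul : d * (n / d) ∣ i * (n / d) := by rw [hnd]; exact h2
    have hnd0 : 0 < n / d := Nat.div_pos (Nat.le_of_dvd hn0 hdn) hd0
    exact (Nat.mul_dvd_mul_iff_right hnd0).mp hmul
  obtain ⟨i₁, hii⟩ := h3
  obtain ⟨k₁, hk₁⟩ := hdk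
  obtain ⟨n₁, hn₁⟩ := hdn
  have hcop : Nat.Coprime k₁ n₁ := by
    have h5 : Nat.gcd (d * k₁) (d * n₁) = d := by rw [← hk₁, ← hn₁]
    rw [Nat.gcd_mul_left] at h5
    have : d * Nat.gcd k₁ n₁ = d * 1 := by omega
    exact Nat.eq_of_mul_eq_mul_left hd0 this
  obtain ⟨r, hr⟩ : ∃ r, k₁ * r ≡ 1 [MOD n₁] := by
    have hu : IsUnit (k₁ : ZMod n₁) := (ZMod.isUnit_iff_coprime k₁ n₁).mpr hcop
    obtain ⟨u, hu⟩ := hu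
    refine ⟨((u⁻¹ : (ZMod n₁)ˣ) : ZMod n₁).val, ?_⟩
    have hne : NeZero n₁ := ⟨by rintro rfl; omega⟩
    have : ((k₁ * ((u⁻¹ : (ZMod n₁)ˣ) : ZMod n₁).val : ℕ) : ZMod n₁) = ((1 : ℕ) : ZMod n₁) := by
      push_cast
      rw [ZMod.natCast_val, ZMod.cast_id, ← hu]
      exact_mod_cast u.mul_inv
    exact (ZMod.natCast_eq_natCast_iff _ _ _).mp this
  refine ⟨g ^ (i₁ * r), ?_⟩
  rw [← pow_mul, ← hi, pow_eq_pow_iff_modEq, hord]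
  have hmod : i₁ * r * k ≡ i [MOD n] := by
    have step : i₁ * (k₁ * r) ≡ i₁ * 1 [MOD n₁] := Nat.ModEq.mul_left _ hr
    have step2 : (i₁ * (k₁ * r)) * d ≡ (i₁ * 1) * d [MOD n₁ * d] := Nat.ModEq.mul_right' _ step
    have e1 : (i₁ * (k₁ * r)) * d = i₁ * r * k := by rw [hk₁]; ring
    have e2 : (i₁ * 1) * d = i := by rw [hii]; ring
    have e3 : n₁ * d = n := by rw [hn₁]; ring
    rwa [e1, e2, e3] at step2
  exact hmod

lemma card_pow_eq_one {G : Type*} [CommGroup G] [Fintype G] [IsCyclic G] [DecidableEq G]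
    {d : ℕ} (hd : 0 < d) (hdvd : d ∣ Fintype.card G) :
    (Finset.univ.filter fun w : G => w ^ d = 1).card = d := by
  refine le_antisymm (IsCyclic.card_pow_eq_one_le hd) ?_
  obtain ⟨g, hg⟩ := IsCyclic.exists_generator (α := G)
  have hord : orderOf g = Fintype.card G := by
    rw [orderOf_eq_card_of_forall_mem_zpowers hg, Nat.card_eq_fintype_card]
  set n := Fintype.card G with hn
  obtain ⟨c, hc⟩ := hdvd
  have hn0 : 0 < n := Fintype.card_pos
  have hc0 : 0 < c := by rcases Nat.eq_zero_or_pos c with rfl | h; · omega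
                         exact h
  have hmem : ∀ i ∈ Finset.range d, g ^ (i * c) ∈ Finset.univ.filter fun w : G => w ^ d = 1 := by
    intro i _
    simp only [Finset.mem_filter, Finset.mem_univ, true_and]
    rw [← pow_mul]
    have e : i * c * d = i * n := by rw [hc]; ring
    rw [e, mul_comm, pow_mul]
    rw [show g ^ n = 1 by rw [← hord]; exact pow_orderOf_eq_one g, one_pow]
  have hinj : Set.InjOn (fun i => g ^ (i * c)) (Finset.range d) := by
    intro i hi j hj hij
    simp only [Finset.coe_range, Set.mem_Iio] at hi hj
    have h1 : i * c < orderOf g := by rw [hord, hc]; exact (Nat.mul_lt_mul_right hc0).mpr hi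
    have h2 : j * c < orderOf g := by rw [hord, hc]; exact (Nat.mul_lt_mul_right hc0).mpr hj
    have := pow_injOn_Iio_orderOf (Set.mem_Iio.mpr h1) (Set.mem_Iio.mpr h2) hij
    exact Nat.eq_of_mul_eq_mul_right hc0 this
  calc d = (Finset.range d).card := (Finset.card_range d).symm
  _ ≤ _ := Finset.card_le_card_of_injOn _ hmem hinj


section Arith
variable {p l m s : ℕ}

/-- basic structural consequences of the hypotheses -/
lemma struct (hl : 0 < l) (hm : 0 < m) (hs : s = Nat.gcd l (2 * m)) (hsm : s ∣ m) :
    s ∣ l ∧ 0 < s ∧ Odd (l / s) ∧ Nat.gcd (2 * l) (2 * m) = 2 * s := by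
  have hsl : s ∣ l := hs ▸ Nat.gcd_dvd_left _ _
  have hs0 : 0 < s := by
    rcases Nat.eq_zero_or_pos s with h | h
    · exfalso; rw [hs] at h; have := Nat.eq_zero_of_gcd_eq_zero_left h; omega
    · exact h
  have hglm : Nat.gcd l m = s := by
    refine Nat.dvd_antisymm ?_ (Nat.dvd_gcd hsl hsm)
    rw [hs]
    exact Nat.dvd_gcd (Nat.gcd_dvd_left _ _) (Dvd.dvd.mul_left (Nat.gcd_dvd_right _ _) 2)
  have h2 : Nat.gcd (2 * l) (2 * m) = 2 * s := by rw [Nat.gcd_mul_left, hglm]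
  have hlo : Odd (l / s) := by
    rcases Nat.even_or_odd (l / s) with he | ho
    · exfalso
      obtain ⟨c, hc⟩ := he
      have hls : s * (l / s) = l := Nat.mul_div_cancel' hsl
      have h2s : 2 * s ∣ l := ⟨c, by rw [← hls, hc]; ring⟩
      have h2sm : 2 * s ∣ 2 * m := by exact Nat.mul_dvd_mul_left 2 hsm
      have : 2 * s ∣ s := by
        rw [hs] at *
        exact Nat.dvd_gcd h2s h2sm
      have := Nat.le_of_dvd hs0 this
      omega
    · exact ho
  exact ⟨hsl, hs0, hlo, h2⟩

lemma gcd_pow2_sub_one (hp : 2 ≤ p) (h2 : Nat.gcd (2 * l) (2 * m) = 2 * s) :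
    Nat.gcd (p ^ (2 * l) - 1) (p ^ (2 * m) - 1) = p ^ (2 * s) - 1 := by
  rw [gcd_pow_sub_one p hp, h2]

lemma gcd_pow_add_one (hp : 2 ≤ p) (hsl : s ∣ l) (hlo : Odd (l / s)) (hsm : s ∣ m)
    (h2 : Nat.gcd (2 * l) (2 * m) = 2 * s) (hs0 : 0 < s) :
    Nat.gcd (p ^ l + 1) (p ^ (2 * m) - 1) = p ^ s + 1 := by
  have hp1 : 1 ≤ p := by omega
  set g := Nat.gcd (p ^ l + 1) (p ^ (2 * m) - 1) with hg
  have hgl : g ∣ p ^ l + 1 := Nat.gcd_dvd_left _ _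
  have hgm : g ∣ p ^ (2 * m) - 1 := Nat.gcd_dvd_right _ _
  have h1 : g ∣ p ^ (2 * s) - 1 := by
    have hA : g ∣ p ^ (2 * l) - 1 := hgl.trans (pow_add_one_dvd hp1)
    have := Nat.dvd_gcd hA hgm
    rwa [gcd_pow2_sub_one hp h2] at this
  -- move to ℤ
  have hps : 1 ≤ p ^ s := Nat.one_le_pow _ _ hp1
  have hp2s : 1 ≤ p ^ (2 * s) := Nat.one_le_pow _ _ hp1
  have h2' : (g : ℤ) ∣ (p : ℤ) ^ (2 * s) - 1 := by
    have := Int.natCast_dvd_natCast.mpr h1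
    rwa [Nat.cast_sub hp2s, Nat.cast_pow, Nat.cast_one] at this
  have hl' : (g : ℤ) ∣ (p : ℤ) ^ l + 1 := by
    have := Int.natCast_dvd_natCast.mpr hgl
    rwa [Nat.cast_add, Nat.cast_pow, Nat.cast_one] at this
  obtain ⟨c, hc⟩ := id hlo
  have hls : l = s + 2 * s * c := by
    have h := Nat.mul_div_cancel' hsl
    rw [hc] at h
    have h2 : s * (2 * c + 1) = s + 2 * s * c := by ring
    omega
  have key : (g : ℤ) ∣ (p : ℤ) ^ s + 1 := by
    have e1 : (p : ℤ) ^ l = (p : ℤ) ^ s * ((p : ℤ) ^ (2 * s)) ^ c := by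
      rw [← pow_mul, ← pow_add, hls]
    have h3 : ((p : ℤ) ^ (2 * s)) ^ c ≡ 1 ^ c [ZMOD (g : ℤ)] := by
      refine Int.ModEq.pow c ?_
      exact (Int.modEq_iff_dvd.mpr (by simpa using h2')).symm
    have h4 : (p : ℤ) ^ l ≡ (p : ℤ) ^ s [ZMOD (g : ℤ)] := by
      calc (p : ℤ) ^ l = (p : ℤ) ^ s * ((p : ℤ) ^ (2 * s)) ^ c := e1
      _ ≡ (p : ℤ) ^ s * 1 ^ c [ZMOD (g:ℤ)] := Int.ModEq.mul_left _ h3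
      _ = (p : ℤ) ^ s := by ring
    have h5 : (p : ℤ) ^ l + 1 ≡ (p : ℤ) ^ s + 1 [ZMOD (g : ℤ)] := Int.ModEq.add_right 1 h4
    have h6 : (0 : ℤ) ≡ (p:ℤ)^s + 1 [ZMOD (g:ℤ)] := by
      calc (0 : ℤ) ≡ (p : ℤ) ^ l + 1 [ZMOD (g:ℤ)] := (Int.modEq_zero_iff_dvd.mpr hl').symm
      _ ≡ (p : ℤ) ^ s + 1 [ZMOD (g:ℤ)] := h5
    exact Int.modEq_zero_iff_dvd.mp h6.symm
  have hback : g ∣ p ^ s + 1 := by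
    have := key
    rw [show ((p:ℤ)^s + 1) = ((p ^ s + 1 : ℕ) : ℤ) by push_cast; ring] at this
    exact_mod_cast this
  refine Nat.dvd_antisymm hback (Nat.dvd_gcd ?_ ?_)
  · exact odd_dvd_pow_add_one hsl hlo
  · exact (pow_add_one_dvd (x := p) (k := s) hp1).trans
      (dvd_pow_sub_one (mul_dvd_mul_left 2 hsm))

lemma pm1_dvd_b (hp : 2 ≤ p) (hpo : Odd p) (hs0 : 0 < s) (hsm : s ∣ m) {b : ℕ}
    (hb : (p ^ s + 1) * b = p ^ (2 * m) - 1) : (p - 1) ∣ b := by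
  have hp1 : 1 ≤ p := by omega
  have hpm : 1 ≤ p ^ m := Nat.one_le_pow _ _ hp1
  have hfact : (p ^ m + 1) * (p ^ m - 1) = p ^ (2 * m) - 1 := by
    rw [sq_helper hpm, ← pow_mul, mul_comm m 2]
  rcases Nat.even_or_odd (m / s) with hev | hodd
  · -- even case : p^s+1 ∣ p^m - 1
    have h2sm : 2 * s ∣ m := by
      obtain ⟨c, hc⟩ := hev
      have h := Nat.mul_div_cancel' hsm
      rw [hc] at h
      exact ⟨c, by rw [← h]; ring⟩
    have hdvd : p ^ s + 1 ∣ p ^ m - 1 :=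
      (pow_add_one_dvd hp1).trans (dvd_pow_sub_one h2sm)
    obtain ⟨w, hw⟩ := hdvd
    have hbw : b = w * (p ^ m + 1) := by
      have h1 : (p ^ s + 1) * b = (p ^ s + 1) * (w * (p ^ m + 1)) := by
        rw [hb, ← hfact, hw]; ring
      exact Nat.eq_of_mul_eq_mul_left (by positivity) h1
    -- pass to ℤ
    have key : ((p : ℤ) - 1) ∣ (w : ℤ) * ((p:ℤ) ^ m + 1) := by
      have d1 : ((p:ℤ) - 1) ∣ (p:ℤ) ^ m - 1 := by simpa using sub_dvd_pow_sub_pow (p:ℤ) 1 m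
      have d2 : ((p:ℤ) - 1) ∣ (p:ℤ) ^ s - 1 := by simpa using sub_dvd_pow_sub_pow (p:ℤ) 1 s
      have hwz : ((p:ℤ) ^ s + 1) * w = (p:ℤ) ^ m - 1 := by
        have := congrArg (fun n : ℕ => (n : ℤ)) hw
        push_cast [Nat.cast_sub hpm] at this
        push_cast
        linarith [this]
      have d3 : ((p:ℤ) - 1) ∣ 2 * w := by
        have e : 2 * (w:ℤ) = ((p:ℤ)^m - 1) - ((p:ℤ)^s - 1) * w := by rw [← hwz]; ring
        rw [e]
        exact dvd_sub d1 (d2.mul_right _)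
      have e2 : (w:ℤ) * ((p:ℤ)^m + 1) = w * ((p:ℤ)^m - 1) + 2 * w := by ring
      rw [e2]
      exact dvd_add (d1.mul_left _) d3
    have : ((p : ℤ) - 1) ∣ (b : ℤ) := by
      rw [hbw]; push_cast; exact key
    rw [show ((p:ℤ) - 1) = ((p - 1 : ℕ) : ℤ) by push_cast [Nat.cast_sub hp1]; ring] at this
    exact_mod_cast this
  · -- odd case : p^s+1 ∣ p^m + 1
    have hdvd : p ^ s + 1 ∣ p ^ m + 1 := odd_dvd_pow_add_one hsm hodd
    obtain ⟨w, hw⟩ := hdvd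
    have hbw : b = (p ^ m - 1) * w := by
      have h1 : (p ^ s + 1) * b = (p ^ s + 1) * ((p ^ m - 1) * w) := by
        rw [hb, ← hfact, hw]; ring
      exact Nat.eq_of_mul_eq_mul_left (by positivity) h1
    have d1 : (p - 1) ∣ p ^ m - 1 := by
      have := dvd_pow_sub_one (x := p) (one_dvd m)
      rwa [pow_one] at this
    rw [hbw]
    exact d1.mul_right _
  
lemma t_parity (hp : 2 ≤ p) (hpo : Odd p) (hs0 : 0 < s) (hsm : s ∣ m) {t : ℕ}
    (ht : (p ^ (2 * s) - 1) * t = p ^ (2 * m) - 1) : (Odd t ↔ Odd (m / s)) := by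
  have hp1 : 1 ≤ p := by omega
  set M := m / s with hM
  have hmsM : m = s * M := (Nat.mul_div_cancel' hsm).symm
  set x : ℤ := (p : ℤ) ^ (2 * s) with hx
  have hx1 : 1 ≤ p ^ (2 * s) := Nat.one_le_pow _ _ hp1
  have h2m : 1 ≤ p ^ (2 * m) := Nat.one_le_pow _ _ hp1
  have htz : (x - 1) * t = x ^ M - 1 := by
    have h0 := congrArg (fun n : ℕ => (n : ℤ)) ht
    push_cast [Nat.cast_sub hx1, Nat.cast_sub h2m] at h0
    rw [hx, ← pow_mul, show 2 * s * M = 2 * m by rw [hmsM]; ring]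
    exact h0
  have hgeom : (x - 1) * (∑ j ∈ Finset.range M, x ^ j) = x ^ M - 1 := by
    have := geom_sum_mul x M
    linarith [this]
  have hxne : x - 1 ≠ 0 := by
    have h2x : (2:ℕ) ≤ p ^ (2*s) := le_trans hp (Nat.le_self_pow (by omega) p)
    have : (2:ℤ) ≤ x := by rw [hx]; exact_mod_cast h2x
    omega
  have htsum : (t : ℤ) = ∑ j ∈ Finset.range M, x ^ j :=
    mul_left_cancel₀ hxne (by rw [htz, hgeom])
  -- parity via ZMod 2
  have hcast : ((t : ℤ) : ZMod 2) = (M : ZMod 2) := by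
    rw [htsum]
    push_cast
    have hp2 : ((p : ℕ) : ZMod 2) = 1 := by
      obtain ⟨c, hc⟩ := hpo
      rw [hc]
      push_cast
      rw [show ((2:ZMod 2)) = 0 by decide]
      ring
    have hx2 : ((x : ℤ) : ZMod 2) = 1 := by
      rw [hx]
      push_cast
      rw [hp2, one_pow]
    rw [Finset.sum_congr rfl (fun j _ => by rw [hx2, one_pow])]
    simp
  have : ((t : ℕ) : ZMod 2) = ((M : ℕ) : ZMod 2) := by exact_mod_cast hcast
  have hmod := (ZMod.natCast_eq_natCast_iff _ _ _).mp this
  unfold Nat.ModEq at hmod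
  rw [Nat.odd_iff, Nat.odd_iff, hmod]

end Arith


section Char
variable (p : ℕ) [Fact p.Prime]

lemma p_pos : 0 < p := (Fact.out : p.Prime).pos
lemma p_one_lt : 1 < p := (Fact.out : p.Prime).one_lt

lemma two_pi_I_ne_zero : (2 * (Real.pi : ℂ) * Complex.I) ≠ 0 := by
  simp [Real.pi_ne_zero, Complex.I_ne_zero]

lemma zetaP_pow (k : ℕ) : zetaP p ^ k = Complex.exp ((k : ℂ) * (2 * Real.pi * Complex.I) / p) := by
  rw [zetaP, ← Complex.exp_nat_mul]
  ring_nf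

lemma zetaP_pow_p : zetaP p ^ p = 1 := by
  rw [zetaP_pow]
  have hp0 : (p : ℂ) ≠ 0 := Nat.cast_ne_zero.mpr (p_pos p).ne'
  rw [show ((p:ℕ):ℂ) * (2 * Real.pi * Complex.I) / p = 2 * Real.pi * Complex.I by
    field_simp]
  exact Complex.exp_two_pi_mul_I

lemma zetaP_pow_eq_one_iff (k : ℕ) : zetaP p ^ k = 1 ↔ p ∣ k := by
  have hp0 : (p : ℂ) ≠ 0 := Nat.cast_ne_zero.mpr (p_pos p).ne'
  rw [zetaP_pow, Complex.exp_eq_one_iff]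
  constructor
  · rintro ⟨n, hn⟩
    have hmul : (k : ℂ) * (2 * Real.pi * Complex.I) = (n * p) * (2 * Real.pi * Complex.I) := by
      have h := congrArg (fun z : ℂ => z * p) hn
      rw [div_mul_cancel₀ _ hp0] at h
      rw [h]; ring
    have h2 : (k : ℂ) = (n : ℂ) * p := mul_right_cancel₀ two_pi_I_ne_zero hmul
    have h3 : (k : ℤ) = n * p := by exact_mod_cast h2
    have : (p : ℤ) ∣ (k : ℤ) := ⟨n, by rw [h3]; ring⟩
    exact_mod_cast this
  · rintro ⟨c, rfl⟩
    refine ⟨c, ?_⟩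
    push_cast
    field_simp


def psi0 (z : ZMod p) : ℂ := zetaP p ^ z.val

lemma zetaP_pow_mod (x : ℕ) : zetaP p ^ (x % p) = zetaP p ^ x := by
  conv_rhs => rw [← Nat.div_add_mod x p]
  rw [pow_add, pow_mul, zetaP_pow_p, one_pow, one_mul]

lemma psi0_zero : psi0 p 0 = 1 := by
  simp [psi0, ZMod.val_zero]

lemma psi0_add (a b : ZMod p) : psi0 p (a + b) = psi0 p a * psi0 p b := by
  haveI : NeZero p := ⟨(p_pos p).ne'⟩
  rw [psi0, psi0, psi0, ZMod.val_add, zetaP_pow_mod, pow_add]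

lemma psi0_ne_one {a : ZMod p} (ha : a ≠ 0) : psi0 p a ≠ 1 := by
  haveI : NeZero p := ⟨(p_pos p).ne'⟩
  rw [psi0, Ne, zetaP_pow_eq_one_iff]
  intro hdvd
  have h1 : a.val < p := ZMod.val_lt a
  have h2 : a.val ≠ 0 := fun h => ha (by rwa [← ZMod.val_eq_zero])
  have h3 := Nat.le_of_dvd (Nat.pos_of_ne_zero h2) hdvd
  omega

lemma psi0_one_val : psi0 p 1 = zetaP p := by
  rw [psi0, ZMod.val_one_eq_one_mod]
  exact zetaP_pow_mod p 1 |>.trans (pow_one _)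

lemma sum_psi0 : ∑ z : ZMod p, psi0 p z = 0 := by
  haveI : NeZero p := ⟨(p_pos p).ne'⟩
  have key : (∑ z : ZMod p, psi0 p z) * zetaP p = ∑ z : ZMod p, psi0 p z := by
    rw [Finset.sum_mul]
    have h1 : ∀ z : ZMod p, psi0 p z * zetaP p = psi0 p (z + 1) := by
      intro z
      rw [psi0_add, psi0_one_val]
    rw [Finset.sum_congr rfl (fun z _ => h1 z)]
    exact Fintype.sum_equiv (Equiv.addRight (1 : ZMod p)) _ _ (fun z => rfl)
  have h2 : (∑ z : ZMod p, psi0 p z) * (zetaP p - 1) = 0 := by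
    rw [mul_sub, key, mul_one, sub_self]
  rcases mul_eq_zero.mp h2 with h | h
  · exact h
  · exfalso
    have : zetaP p = 1 := by linear_combination h
    have := (zetaP_pow_eq_one_iff p 1).mp (by rw [pow_one]; exact this)
    have := Nat.le_of_dvd one_pos this
    have := p_one_lt p
    omega

lemma sum_psi0_mul (w : ZMod p) :
    ∑ z : ZMod p, psi0 p (z * w) = if w = 0 then (p : ℂ) else 0 := by
  split_ifs with hw
  · subst hw
    simp only [mul_zero, psi0_zero, Finset.sum_const, Finset.card_univ, ZMod.card,
      nsmul_eq_mul, mul_one]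
  · rw [← sum_psi0 p]
    exact Fintype.sum_equiv (Equiv.mulRight₀ w hw) _ _ (fun z => rfl)

lemma sum_psi0_compl : ∑ z ∈ ({0}ᶜ : Finset (ZMod p)), psi0 p (-z) = -1 := by
  haveI : NeZero p := ⟨(p_pos p).ne'⟩
  have huniv : ∑ z : ZMod p, psi0 p (-z) = 0 := by
    rw [← sum_psi0 p]
    exact Fintype.sum_equiv (Equiv.neg (ZMod p)) _ _ (fun z => rfl)
  have hsplit := Finset.add_sum_erase Finset.univ (fun z : ZMod p => psi0 p (-z))
    (Finset.mem_univ (0 : ZMod p))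
  rw [Finset.compl_singleton]
  rw [huniv] at hsplit
  simp only [neg_zero, psi0_zero] at hsplit
  linear_combination hsplit

end Char

section Field
variable (p e : ℕ) [Fact p.Prime]

noncomputable local instance instFintypeGF : Fintype (GaloisField p e) := Fintype.ofFinite _

lemma card_GF (he : e ≠ 0) : Fintype.card (GaloisField p e) = p ^ e := by
  rw [← Nat.card_eq_fintype_card]
  exact GaloisField.card p e he

lemma tr_add (x y : GaloisField p e) : tr p e (x + y) = tr p e x + tr p e y := by
  simp [tr, map_add]

lemma tr_zero : tr p e 0 = 0 := by simp [tr]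

lemma tr_smul (z : ZMod p) (x : GaloisField p e) :
    tr p e (algebraMap (ZMod p) (GaloisField p e) z * x) = z * tr p e x := by
  rw [tr, tr, ← Algebra.smul_def, map_smul, smul_eq_mul]

lemma algebraMap_pow_p (z : ZMod p) :
    (algebraMap (ZMod p) (GaloisField p e) z) ^ p = algebraMap (ZMod p) (GaloisField p e) z := by
  rw [← map_pow, ZMod.pow_card]

def frobAlg : GaloisField p e ≃ₐ[ZMod p] GaloisField p e :=
  AlgEquiv.ofRingEquiv (f := frobeniusEquiv (GaloisField p e) p)
    (fun z => by
      rw [frobeniusEquiv_apply, frobenius_def]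
      exact algebraMap_pow_p p e z)

lemma frobAlg_apply (x : GaloisField p e) : frobAlg p e x = x ^ p := rfl

lemma tr_pow_p (x : GaloisField p e) : tr p e (x ^ p) = tr p e x := by
  have := Algebra.trace_eq_of_algEquiv (frobAlg p e) x
  rw [frobAlg_apply] at this
  exact this

lemma tr_ppow (k : ℕ) (x : GaloisField p e) : tr p e (x ^ p ^ k) = tr p e x := by
  induction k with
  | zero => simp
  | succ n ih =>
    rw [pow_succ, pow_mul, tr_pow_p, ih]

lemma pow_pe (he : e ≠ 0) (x : GaloisField p e) : x ^ p ^ e = x := by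
  have := FiniteField.pow_card x
  rwa [card_GF p e he] at this

lemma pow_pe_mul (he : e ≠ 0) (k : ℕ) (x : GaloisField p e) : x ^ p ^ (e * k) = x := by
  induction k with
  | zero => simp
  | succ n ih =>
    rw [Nat.mul_succ, pow_add, pow_mul, ih, pow_pe p e he]

lemma tr_mul_frob (he : e ≠ 0) (l : ℕ) (w y : GaloisField p e) :
    tr p e (w ^ p ^ (l * (e - 1)) * y) = tr p e (w * y ^ p ^ l) := by
  have h1 := tr_ppow p e l (w ^ p ^ (l * (e - 1)) * y)
  rw [← h1]
  congr 1
  rw [mul_pow, ← pow_mul, ← pow_add]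
  have he1 : l * (e - 1) + l = e * l := by
    obtain ⟨n, rfl⟩ : ∃ n, e = n + 1 := ⟨e - 1, by omega⟩
    simp only [Nat.add_sub_cancel]
    ring
  rw [he1, pow_pe_mul p e he l]

lemma exists_tr_ne {a : GaloisField p e} (ha : a ≠ 0) :
    ∃ b : GaloisField p e, tr p e (a * b) ≠ 0 := by
  by_contra hcon
  push_neg at hcon
  have htr := (traceForm_nondegenerate (ZMod p) (GaloisField p e)).1 a
  refine ha (htr fun y => ?_)
  rw [Algebra.traceForm_apply]
  exact hcon y

lemma sum_psi_tr_zero (he : e ≠ 0) :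
    ∑ x : GaloisField p e, psi0 p (tr p e ((0 : GaloisField p e) * x)) = ((p : ℂ)) ^ e := by
  simp only [zero_mul, tr_zero, psi0_zero, Finset.sum_const, Finset.card_univ,
    card_GF p e he, nsmul_eq_mul, mul_one]
  push_cast
  ring

lemma sum_psi_tr_ne {a : GaloisField p e} (ha : a ≠ 0) :
    ∑ x : GaloisField p e, psi0 p (tr p e (a * x)) = 0 := by
  obtain ⟨b, hb⟩ := exists_tr_ne p e ha
  set S := ∑ x : GaloisField p e, psi0 p (tr p e (a * x)) with hS
  have key : psi0 p (tr p e (a * b)) * S = S := by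
    rw [hS, Finset.mul_sum]
    have h1 : ∀ x : GaloisField p e, psi0 p (tr p e (a * b)) * psi0 p (tr p e (a * x))
        = psi0 p (tr p e (a * (b + x))) := by
      intro x
      rw [← psi0_add, ← tr_add, mul_add]
    rw [Finset.sum_congr rfl (fun x _ => h1 x)]
    exact Fintype.sum_equiv (Equiv.addLeft b) _ _ (fun x => rfl)
  have h2 : (psi0 p (tr p e (a * b)) - 1) * S = 0 := by
    rw [sub_mul, key, one_mul, sub_self]
  rcases mul_eq_zero.mp h2 with h | h
  · exact absurd (by linear_combination h) (psi0_ne_one p hb)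
  · exact h


section WithL
variable (l : ℕ)

/-- `T(z) = S(z, 0)`, the basic Weil sum. -/
def TS (z : ZMod p) : ℂ :=
  ∑ x : GaloisField p e,
    psi0 p (tr p e (algebraMap (ZMod p) (GaloisField p e) z * x ^ (p ^ l + 1)))

lemma TS_zero (he : e ≠ 0) : TS p e l 0 = (p : ℂ) ^ e := by
  rw [TS]
  simp only [map_zero, zero_mul, tr_zero, psi0_zero, Finset.sum_const, Finset.card_univ,
    card_GF p e he, nsmul_eq_mul, mul_one]
  push_cast
  ring

lemma TS_apply (z : ZMod p) : TS p e l z =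
    ∑ x : GaloisField p e, psi0 p (z * tr p e (x ^ (p ^ l + 1))) := by
  rw [TS]
  exact Finset.sum_congr rfl (fun x _ => by rw [tr_smul])

/-- if `ι z` is a `(p^l+1)`-th power of a unit then `T(z) = T(1)` -/
lemma TS_const_of_root {z : ZMod p}
    (hw : ∃ w : (GaloisField p e)ˣ,
      ((w : GaloisField p e)) ^ (p ^ l + 1) = algebraMap (ZMod p) (GaloisField p e) z) :
    TS p e l z = TS p e l 1 := by
  obtain ⟨w, hw⟩ := hw
  rw [TS, TS]
  simp only [map_one, one_mul]
  rw [← hw]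
  have hw0 : (w : GaloisField p e) ≠ 0 := Units.ne_zero w
  refine Fintype.sum_equiv (Equiv.mulLeft₀ (w : GaloisField p e) hw0) _ _ (fun x => ?_)
  simp only [Equiv.coe_fn_mk, Equiv.mulLeft₀_apply]
  rw [mul_pow]

/-- existence of the root needed for `TS_const` -/
lemma exists_root {m s : ℕ} (he2 : e = 2 * m) (hm : 0 < m) (hs0 : 0 < s)
    (hd0gcd : Nat.gcd (p ^ l + 1) (p ^ (2 * m) - 1) = p ^ s + 1)
    {b : ℕ} (hb : (p ^ s + 1) * b = p ^ (2 * m) - 1) (hpb : (p - 1) ∣ b)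
    {z : ZMod p} (hz : z ≠ 0) :
    ∃ w : (GaloisField p e)ˣ,
      ((w : GaloisField p e)) ^ (p ^ l + 1) = algebraMap (ZMod p) (GaloisField p e) z := by
  classical
  have he : e ≠ 0 := by omega
  have hcardU : Nat.card (GaloisField p e)ˣ = p ^ (2 * m) - 1 := by
    rw [Nat.card_eq_fintype_card, Fintype.card_units, card_GF p e he, he2]
  have hιz : algebraMap (ZMod p) (GaloisField p e) z ≠ 0 := by
    intro h
    exact hz ((algebraMap (ZMod p) (GaloisField p e)).injective (by rw [h, map_zero]))
  set c : (GaloisField p e)ˣ := Units.mk0 _ hιz with hc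
  have hcb : c ^ b = 1 := by
    obtain ⟨k, hk⟩ := hpb
    have hzb : z ^ b = 1 := by
      rw [hk, pow_mul, ZMod.pow_card_sub_one_eq_one hz, one_pow]
    apply Units.ext
    rw [Units.val_pow_eq_pow_val, Units.val_one]
    rw [hc, Units.val_mk0, ← map_pow, hzb, map_one]
  obtain ⟨w, hwk⟩ := exists_pow_eq (p ^ l + 1) c (by
    rw [hcardU, hd0gcd]
    have hdiv : (p ^ (2 * m) - 1) / (p ^ s + 1) = b :=
      Nat.div_eq_of_eq_mul_left (by positivity) (by rw [← hb]; ring)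
    rw [hdiv]
    exact hcb)
  refine ⟨w, ?_⟩
  have := congrArg (Units.val) hwk
  rw [Units.val_pow_eq_pow_val] at this
  rw [this, hc, Units.val_mk0]


lemma frob_pow_inj {x y : GaloisField p e} (k : ℕ) (h : x ^ p ^ k = y ^ p ^ k) : x = y := by
  have h1 : (x - y) ^ p ^ k = 0 := by rw [sub_pow_char_pow, h, sub_self]
  have h2 : x - y = 0 := by
    have hk : p ^ k ≠ 0 := pow_ne_zero _ (p_pos p).ne'
    exact pow_eq_zero_iff hk |>.mp h1
  linear_combination h2

lemma ker_eq (hp2 : p ≠ 2) (he : e ≠ 0) (u : GaloisField p e) :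
    u ^ p ^ (l * (e - 1)) + u ^ p ^ l = 0 ↔ u ^ p ^ (2 * l) = -u := by
  have hoddp : Odd p := (Fact.out : p.Prime).odd_of_ne_two hp2
  have hodd : Odd (p ^ l) := hoddp.pow
  have hjl : p ^ (l * (e - 1)) * p ^ l = p ^ (e * l) := by
    rw [← pow_add]
    congr 1
    obtain ⟨n, rfl⟩ : ∃ n, e = n + 1 := ⟨e - 1, by omega⟩
    simp only [Nat.add_sub_cancel]
    ring
  have hll : p ^ l * p ^ l = p ^ (2 * l) := by rw [← pow_add, two_mul]
  constructor
  · intro h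
    have h1 : u ^ p ^ (l * (e - 1)) = -(u ^ p ^ l) := by linear_combination h
    have h2 := congrArg (fun x : GaloisField p e => x ^ p ^ l) h1
    rw [← pow_mul, hjl, pow_pe_mul p e he l, Odd.neg_pow hodd, ← pow_mul, hll] at h2
    linear_combination h2
  · intro h
    refine frob_pow_inj p e (y := (0 : GaloisField p e)) l ?_
    rw [add_pow_char_pow, ← pow_mul, hjl, pow_pe_mul p e he l, ← pow_mul, hll, h]
    rw [zero_pow (pow_ne_zero l (p_pos p).ne')]
    ring

lemma tr_ud_eq_zero (hp2 : p ≠ 2) {u : GaloisField p e} (hu : u ^ p ^ (2 * l) = -u) :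
    tr p e (u ^ (p ^ l + 1)) = 0 := by
  set w := u ^ (p ^ l + 1) with hwdef
  have hw : w ^ p ^ l = -w := by
    rw [hwdef, ← pow_mul]
    have e1 : (p ^ l + 1) * p ^ l = p ^ (2 * l) + p ^ l := by
      rw [add_mul, one_mul, ← pow_add, two_mul]
    rw [e1, pow_add, hu, pow_succ]
    ring
  have h1 : tr p e (-w) = tr p e w := by rw [← hw, tr_ppow]
  have h2 : tr p e (-w) = - tr p e w := by rw [tr, tr]; exact map_neg _ _
  have h3 : (2 : ZMod p) * tr p e w = 0 := by
    rw [two_mul]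
    linear_combination - h1 + h2
  have h4 : (2 : ZMod p) ≠ 0 := by
    intro h
    have hd := (ZMod.natCast_eq_zero_iff 2 p).mp (by exact_mod_cast h)
    have := (Fact.out : p.Prime).two_le
    have := Nat.le_of_dvd two_pos hd
    omega
  rcases mul_eq_zero.mp h3 with h | h
  · exact absurd h h4
  · exact h

lemma TS_mul [DecidableEq (GaloisField p e)] (hp2 : p ≠ 2) (he : e ≠ 0) :
    TS p e l 1 * TS p e l (-1) = (p : ℂ) ^ e *
      ((Finset.univ.filter fun u : GaloisField p e => u ^ p ^ (2 * l) = -u).card : ℂ) := by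
  rw [TS, TS]
  simp only [map_one, one_mul, map_neg, neg_mul]
  rw [Finset.sum_mul_sum]
  have step1 : ∀ x y : GaloisField p e,
      psi0 p (tr p e (x ^ (p ^ l + 1))) * psi0 p (tr p e (-(y ^ (p ^ l + 1))))
        = psi0 p (tr p e (x ^ (p ^ l + 1) - y ^ (p ^ l + 1))) := by
    intro x y
    rw [← psi0_add, ← tr_add, sub_eq_add_neg]
  rw [Finset.sum_congr rfl (fun x _ => Finset.sum_congr rfl (fun y _ => step1 x y))]
  rw [Finset.sum_comm]
  have step2 : ∀ y : GaloisField p e,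
      (∑ x : GaloisField p e, psi0 p (tr p e (x ^ (p ^ l + 1) - y ^ (p ^ l + 1))))
      = ∑ u : GaloisField p e, psi0 p (tr p e ((u + y) ^ (p ^ l + 1) - y ^ (p ^ l + 1))) := by
    intro y
    exact (Fintype.sum_equiv (Equiv.addRight y) _ _ (fun u => rfl)).symm
  rw [Finset.sum_congr rfl (fun y _ => step2 y), Finset.sum_comm]
  have step3 : ∀ u y : GaloisField p e,
      psi0 p (tr p e ((u + y) ^ (p ^ l + 1) - y ^ (p ^ l + 1)))
      = psi0 p (tr p e (u ^ (p ^ l + 1))) *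
          psi0 p (tr p e ((u ^ p ^ (l * (e - 1)) + u ^ p ^ l) * y)) := by
    intro u y
    have hexp : (u + y) ^ (p ^ l + 1) - y ^ (p ^ l + 1)
        = u ^ (p ^ l + 1) + (u * y ^ p ^ l + u ^ p ^ l * y) := by
      have h := add_pow_char_pow (R := GaloisField p e) (p := p) (x := u) (y := y) (n := l)
      rw [pow_succ, pow_succ, pow_succ, h]
      ring
    rw [hexp, tr_add, psi0_add]
    congr 1
    rw [tr_add, add_mul, tr_add, tr_mul_frob p e he l u y]
  have inner : ∀ u : GaloisField p e,
      (∑ y : GaloisField p e, psi0 p (tr p e ((u + y) ^ (p ^ l + 1) - y ^ (p ^ l + 1))))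
      = psi0 p (tr p e (u ^ (p ^ l + 1))) *
        (if u ^ p ^ (l * (e - 1)) + u ^ p ^ l = 0 then ((p : ℂ)) ^ e else 0) := by
    intro u
    rw [Finset.sum_congr rfl (fun y _ => step3 u y), ← Finset.mul_sum]
    congr 1
    by_cases hA : u ^ p ^ (l * (e - 1)) + u ^ p ^ l = 0
    · rw [if_pos hA]
      simp only [hA]
      exact sum_psi_tr_zero p e he
    · rw [if_neg hA]
      exact sum_psi_tr_ne p e hA
  rw [Finset.sum_congr rfl (fun u _ => inner u)]
  have step4 : ∀ u : GaloisField p e,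
      psi0 p (tr p e (u ^ (p ^ l + 1))) *
        (if u ^ p ^ (l * (e - 1)) + u ^ p ^ l = 0 then ((p : ℂ)) ^ e else 0)
      = if u ^ p ^ (2 * l) = -u then psi0 p (tr p e (u ^ (p ^ l + 1))) * (p : ℂ) ^ e else 0 := by
    intro u
    rw [mul_ite, mul_zero]
    by_cases h : u ^ p ^ (2 * l) = -u
    · rw [if_pos ((ker_eq p e l hp2 he u).mpr h), if_pos h]
    · rw [if_neg (fun hc => h ((ker_eq p e l hp2 he u).mp hc)), if_neg h]
  rw [Finset.sum_congr rfl (fun u _ => step4 u)]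
  rw [← Finset.sum_filter]
  have step5 : ∀ u ∈ Finset.univ.filter (fun u : GaloisField p e => u ^ p ^ (2 * l) = -u),
      psi0 p (tr p e (u ^ (p ^ l + 1))) * (p : ℂ) ^ e = (p : ℂ) ^ e := by
    intro u hu
    rw [tr_ud_eq_zero p e l hp2 (Finset.mem_filter.mp hu).2, psi0_zero, one_mul]
  rw [Finset.sum_congr rfl step5, Finset.sum_const, nsmul_eq_mul]
  ring


lemma pN1 (he : e ≠ 0) :
    (p : ℂ) * (((Finset.univ.filter fun x : GaloisField p e =>
        tr p e (x ^ (p ^ l + 1)) = 1).card : ℕ) : ℂ)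
      = (p : ℂ) ^ e + ∑ z ∈ ({0}ᶜ : Finset (ZMod p)), psi0 p (-z) * TS p e l z := by
  haveI : NeZero p := ⟨(p_pos p).ne'⟩
  have main : ∀ x : GaloisField p e, (if tr p e (x ^ (p ^ l + 1)) = 1 then (p : ℂ) else 0)
      = ∑ z : ZMod p, psi0 p (-z) * psi0 p (z * tr p e (x ^ (p ^ l + 1))) := by
    intro x
    have h1 : ∀ z : ZMod p, psi0 p (-z) * psi0 p (z * tr p e (x ^ (p ^ l + 1)))
        = psi0 p (z * (tr p e (x ^ (p ^ l + 1)) - 1)) := by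
      intro z
      rw [← psi0_add]
      congr 1
      ring
    rw [Finset.sum_congr rfl (fun z _ => h1 z), sum_psi0_mul]
    by_cases hx : tr p e (x ^ (p ^ l + 1)) = 1
    · rw [if_pos hx, if_pos (by rw [hx]; ring)]
    · rw [if_neg hx, if_neg (fun hc => hx (by linear_combination hc))]
  calc (p : ℂ) * (((Finset.univ.filter fun x : GaloisField p e =>
        tr p e (x ^ (p ^ l + 1)) = 1).card : ℕ) : ℂ)
      = ∑ x : GaloisField p e, (if tr p e (x ^ (p ^ l + 1)) = 1 then (p : ℂ) else 0) := by
        rw [← Finset.sum_boole, Finset.mul_sum]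
        exact Finset.sum_congr rfl (fun x _ => by rw [mul_ite, mul_one, mul_zero])
  _ = ∑ x : GaloisField p e, ∑ z : ZMod p,
        psi0 p (-z) * psi0 p (z * tr p e (x ^ (p ^ l + 1))) :=
      Finset.sum_congr rfl (fun x _ => main x)
  _ = ∑ z : ZMod p, ∑ x : GaloisField p e,
        psi0 p (-z) * psi0 p (z * tr p e (x ^ (p ^ l + 1))) := Finset.sum_comm
  _ = ∑ z : ZMod p, psi0 p (-z) * TS p e l z := by
      refine Finset.sum_congr rfl (fun z _ => ?_)
      rw [← Finset.mul_sum, TS_apply]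
  _ = (p : ℂ) ^ e + ∑ z ∈ ({0}ᶜ : Finset (ZMod p)), psi0 p (-z) * TS p e l z := by
      rw [Finset.compl_singleton,
        ← Finset.add_sum_erase Finset.univ _ (Finset.mem_univ (0 : ZMod p))]
      congr 1
      rw [neg_zero, psi0_zero, one_mul, TS_zero p e l he]


lemma dvd_N1 {m : ℕ} (he2 : e = 2 * m) (hm : 0 < m) {s : ℕ}
    (hd0gcd : Nat.gcd (p ^ l + 1) (p ^ (2 * m) - 1) = p ^ s + 1)
    {b : ℕ} (hb : (p ^ s + 1) * b = p ^ (2 * m) - 1) :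
    (p ^ s + 1) ∣ (Finset.univ.filter fun x : GaloisField p e =>
        tr p e (x ^ (p ^ l + 1)) = 1).card := by
  classical
  have he : e ≠ 0 := by omega
  set U : Finset (GaloisField p e)ˣ :=
    Finset.univ.filter
      (fun u : (GaloisField p e)ˣ => tr p e ((u : GaloisField p e) ^ (p ^ l + 1)) = 1) with hU
  have hAeq : (Finset.univ.filter fun x : GaloisField p e => tr p e (x ^ (p ^ l + 1)) = 1)
      = U.image Units.val := by
    ext x
    simp only [Finset.mem_filter, Finset.mem_univ, true_and, Finset.mem_image]
    constructor
    · intro hx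
      have hx0 : x ≠ 0 := by
        intro h0
        rw [h0, zero_pow (by omega), tr_zero] at hx
        exact (zero_ne_one (α := ZMod p)) hx
      refine ⟨Units.mk0 x hx0, ?_, rfl⟩
      rw [hU]
      simp only [Finset.mem_filter, Finset.mem_univ, true_and, Units.val_mk0]
      exact hx
    · rintro ⟨u, hu, rfl⟩
      rw [hU] at hu
      simp only [Finset.mem_filter, Finset.mem_univ, true_and] at hu
      exact hu
  rw [hAeq, Finset.card_image_of_injective _ Units.val_injective]
  rw [Finset.card_eq_sum_card_fiberwise
    (f := fun u => u ^ (p ^ l + 1)) (t := U.image (fun u => u ^ (p ^ l + 1)))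
    (fun u hu => Finset.mem_image_of_mem _ hu)]
  have hcardU : Fintype.card (GaloisField p e)ˣ = p ^ (2 * m) - 1 := by
    rw [Fintype.card_units, card_GF p e he, he2]
  have hfiber : ∀ y ∈ U.image (fun u => u ^ (p ^ l + 1)),
      (U.filter fun u => u ^ (p ^ l + 1) = y).card = p ^ s + 1 := by
    intro y hy
    obtain ⟨u₀, hu₀U, hu₀⟩ := Finset.mem_image.mp hy
    have hu₀tr : tr p e ((u₀ : GaloisField p e) ^ (p ^ l + 1)) = 1 := by
      have := (Finset.mem_filter.mp hu₀U).2
      exact this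
    have hUfil : U.filter (fun u => u ^ (p ^ l + 1) = y)
        = Finset.univ.filter (fun u : (GaloisField p e)ˣ => u ^ (p ^ l + 1) = y) := by
      ext u
      simp only [hU, Finset.mem_filter, Finset.mem_univ, true_and]
      constructor
      · rintro ⟨-, h⟩; exact h
      · intro h
        refine ⟨?_, h⟩
        have hvv : ((u : GaloisField p e)) ^ (p ^ l + 1)
            = ((u₀ : GaloisField p e)) ^ (p ^ l + 1) := by
          rw [← Units.val_pow_eq_pow_val, ← Units.val_pow_eq_pow_val, h, hu₀]
        rw [hvv]
        exact hu₀tr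
    rw [hUfil]
    have hbij : (Finset.univ.filter (fun u : (GaloisField p e)ˣ => u ^ (p ^ l + 1) = y)).card
        = (Finset.univ.filter (fun u : (GaloisField p e)ˣ => u ^ (p ^ l + 1) = 1)).card := by
      refine Finset.card_bij (fun v _ => u₀⁻¹ * v) ?_ ?_ ?_
      · intro v hv
        simp only [Finset.mem_filter, Finset.mem_univ, true_and] at hv ⊢
        rw [mul_pow, inv_pow, hv, hu₀, inv_mul_cancel]
      · intro v1 h1 v2 h2 h
        exact mul_left_cancel h
      · intro w hw
        simp only [Finset.mem_filter, Finset.mem_univ, true_and] at hw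
        refine ⟨u₀ * w, ?_, by group⟩
        simp only [Finset.mem_filter, Finset.mem_univ, true_and]
        rw [mul_pow, hw, mul_one, hu₀]
    rw [hbij]
    have hgcdiff : (Finset.univ.filter (fun u : (GaloisField p e)ˣ => u ^ (p ^ l + 1) = 1))
        = Finset.univ.filter (fun u : (GaloisField p e)ˣ => u ^ (p ^ s + 1) = 1) := by
      ext u
      simp only [Finset.mem_filter, Finset.mem_univ, true_and]
      rw [← hd0gcd, ← hcardU, pow_gcd_eq_one, and_iff_left pow_card_eq_one]
    rw [hgcdiff]
    refine card_pow_eq_one (by positivity) ?_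
    rw [hcardU]
    exact ⟨b, hb.symm⟩
  rw [Finset.sum_congr rfl hfiber, Finset.sum_const, smul_eq_mul]
  exact dvd_mul_left _ _

lemma card_R [DecidableEq (GaloisField p e)] {m : ℕ} (hp2 : p ≠ 2) (he2 : e = 2 * m) (hm : 0 < m) {s t : ℕ} (hs0 : 0 < s)
    (hg0 : Nat.gcd (p ^ (2 * l) - 1) (p ^ (2 * m) - 1) = p ^ (2 * s) - 1)
    (ht : (p ^ (2 * s) - 1) * t = p ^ (2 * m) - 1) :
    ((Finset.univ.filter fun u : GaloisField p e => u ^ p ^ (2 * l) = -u).card : ℕ)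
      = if Odd t then 1 else p ^ (2 * s) := by
  classical
  have he : e ≠ 0 := by omega
  have hp1 : 2 ≤ p := (Fact.out : p.Prime).two_le
  set k := p ^ (2 * l) - 1 with hk
  have hk1 : p ^ (2 * l) = k + 1 := by
    have : 1 ≤ p ^ (2 * l) := Nat.one_le_pow _ _ (by omega)
    omega
  have hcardU : Fintype.card (GaloisField p e)ˣ = p ^ (2 * m) - 1 := by
    rw [Fintype.card_units, card_GF p e he, he2]
  have hNat : Nat.card (GaloisField p e)ˣ = p ^ (2 * m) - 1 := by
    rw [Nat.card_eq_fintype_card, hcardU]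
  set V : Finset (GaloisField p e)ˣ := Finset.univ.filter (fun u => u ^ k = -1) with hV
  have hsplit : (Finset.univ.filter fun u : GaloisField p e => u ^ p ^ (2 * l) = -u)
      = insert (0 : GaloisField p e) (V.image Units.val) := by
    ext x
    simp only [Finset.mem_filter, Finset.mem_univ, true_and, Finset.mem_insert,
      Finset.mem_image]
    constructor
    · intro hx
      by_cases hx0 : x = 0
      · exact Or.inl hx0
      · refine Or.inr ⟨Units.mk0 x hx0, ?_, rfl⟩
        rw [hV]
        simp only [Finset.mem_filter, Finset.mem_univ, true_and]
        apply Units.ext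
        rw [Units.val_pow_eq_pow_val, Units.val_mk0, Units.val_neg, Units.val_one]
        rw [hk1, pow_succ] at hx
        exact mul_right_cancel₀ hx0 (by rw [hx]; ring)
    · rintro (rfl | ⟨u, hu, rfl⟩)
      · rw [zero_pow (pow_ne_zero _ (by omega : p ≠ 0)), neg_zero]
      · rw [hV] at hu
        simp only [Finset.mem_filter, Finset.mem_univ, true_and] at hu
        have hval := congrArg Units.val hu
        rw [Units.val_pow_eq_pow_val, Units.val_neg, Units.val_one] at hval
        rw [hk1, pow_succ, hval]
        ring
  rw [hsplit, Finset.card_insert_of_notMem (by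
      simp only [Finset.mem_image]
      rintro ⟨u, -, hu⟩
      exact Units.ne_zero u hu),
    Finset.card_image_of_injective _ Units.val_injective]
  have hdvdk : (p ^ (2 * s) - 1) ∣ k := by
    rw [hk, ← hg0]; exact Nat.gcd_dvd_left _ _
  by_cases hto : Odd t
  · rw [if_pos hto]
    have hVempty : V = ∅ := by
      rw [Finset.eq_empty_iff_forall_notMem]
      intro u hu
      rw [hV] at hu
      simp only [Finset.mem_filter, Finset.mem_univ, true_and] at hu
      have h1 : (u ^ k) ^ t = 1 := by
        obtain ⟨k', hk'⟩ := hdvdk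
        rw [← pow_mul]
        have hkt : k * t = (p ^ (2 * m) - 1) * k' := by rw [hk', ← ht]; ring
        rw [hkt, pow_mul]
        rw [show u ^ (p ^ (2 * m) - 1) = 1 from by rw [← hcardU]; exact pow_card_eq_one]
        exact one_pow _
      rw [hu, Odd.neg_pow hto, one_pow] at h1
      have hF : (-1 : GaloisField p e) = 1 := by
        have := congrArg Units.val h1
        simpa using this
      have h2 : ((2 : ℕ) : GaloisField p e) = 0 := by push_cast; linear_combination -hF
      rw [CharP.cast_eq_zero_iff (GaloisField p e) p 2] at h2
      have := Nat.le_of_dvd two_pos h2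
      omega
    rw [hVempty, Finset.card_empty]
  · rw [if_neg hto]
    have hEven : Even t := Nat.not_odd_iff_even.mp hto
    obtain ⟨u₀, hu₀⟩ := exists_pow_eq (G := (GaloisField p e)ˣ) k (-1) (by
      rw [hNat]
      have hgcd : Nat.gcd k (p ^ (2 * m) - 1) = p ^ (2 * s) - 1 := by rw [hk]; exact hg0
      rw [hgcd]
      have hpos : 0 < p ^ (2 * s) - 1 := by
        have : 2 ≤ p ^ (2 * s) := le_trans hp1 (Nat.le_self_pow (by omega) p)
        omega
      have hdiv : (p ^ (2 * m) - 1) / (p ^ (2 * s) - 1) = t :=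
        Nat.div_eq_of_eq_mul_left hpos (by rw [← ht]; ring)
      rw [hdiv]
      exact Even.neg_one_pow hEven)
    have hbij : V.card
        = (Finset.univ.filter (fun u : (GaloisField p e)ˣ => u ^ k = 1)).card := by
      rw [hV]
      refine Finset.card_bij (fun v _ => u₀⁻¹ * v) ?_ ?_ ?_
      · intro v hv
        simp only [Finset.mem_filter, Finset.mem_univ, true_and] at hv ⊢
        rw [mul_pow, inv_pow, hv, hu₀]
        simp
      · intro v1 h1 v2 h2 h
        exact mul_left_cancel h
      · intro w hw
        simp only [Finset.mem_filter, Finset.mem_univ, true_and] at hw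
        refine ⟨u₀ * w, ?_, by group⟩
        simp only [Finset.mem_filter, Finset.mem_univ, true_and]
        rw [mul_pow, hw, mul_one, hu₀]
    have hker : (Finset.univ.filter (fun u : (GaloisField p e)ˣ => u ^ k = 1))
        = Finset.univ.filter (fun u : (GaloisField p e)ˣ => u ^ (p ^ (2 * s) - 1) = 1) := by
      ext u
      simp only [Finset.mem_filter, Finset.mem_univ, true_and]
      rw [← hg0, ← hcardU, pow_gcd_eq_one, and_iff_left pow_card_eq_one]
    have hpos : 0 < p ^ (2 * s) - 1 := by
      have : 2 ≤ p ^ (2 * s) := le_trans hp1 (Nat.le_self_pow (by omega) p)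
      omega
    rw [hbij, hker, card_pow_eq_one hpos (by rw [hcardU]; exact ⟨t, ht.symm⟩)]
    have h1 : 1 ≤ p ^ (2 * s) := Nat.one_le_pow _ _ (by omega)
    omega


lemma weil_TS (z : ZMod p) :
    weilSum p e l (algebraMap (ZMod p) (GaloisField p e) z) 0 = TS p e l z := by
  rw [weilSum, TS]
  refine Finset.sum_congr rfl (fun x _ => ?_)
  rw [zero_mul, add_zero]
  rfl

lemma psi3_master {m s δ : ℕ} [DecidableEq (GaloisField p e)]
    (hpo : Odd p) (hl : 0 < l) (hm : 1 ≤ m)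
    (he2 : e = 2 * m) (hs : s = Nat.gcd l e) (hsm : s ∣ m)
    (hδm : δ ≤ m) (hδs : s ∣ (m - δ)) (hoddδ : Odd ((m - δ) / s))
    (hR : (Finset.univ.filter fun u : GaloisField p e =>
        u ^ p ^ (2 * l) = -u).card = p ^ (2 * δ)) :
    psi3 p e l 0 = ((p : ℂ) - 1) ^ 2 / 2 * (p : ℂ) ^ ((e : ℤ) + m + δ - 3) := by
  have hp1 : 2 ≤ p := (Fact.out : p.Prime).two_le
  have hp2 : p ≠ 2 := by rcases hpo with ⟨c, hc⟩; omega
  have hp3 : 3 ≤ p := by omega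
  have he : e ≠ 0 := by omega
  have hp0C : (p : ℂ) ≠ 0 := Nat.cast_ne_zero.mpr (by omega)
  obtain ⟨hsl, hs0, hlo, hgcd2⟩ := struct hl (by omega) (by rw [hs, he2]) hsm
  have hd0gcd := gcd_pow_add_one (p := p) (l := l) (m := m) (s := s) hp1 hsl hlo hsm hgcd2 hs0
  have hdvdb : (p ^ s + 1) ∣ (p ^ (2 * m) - 1) :=
    (pow_add_one_dvd (x := p) (k := s) (by omega)).trans
      (dvd_pow_sub_one (mul_dvd_mul_left 2 hsm))
  obtain ⟨b, hb⟩ := hdvdb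
  have hb' : (p ^ s + 1) * b = p ^ (2 * m) - 1 := hb.symm
  have hpb := pm1_dvd_b hp1 hpo hs0 hsm hb'
  set N1 := (Finset.univ.filter fun x : GaloisField p e =>
      tr p e (x ^ (p ^ l + 1)) = 1).card with hN1
  set T := TS p e l 1 with hT
  have hTS : ∀ z : ZMod p, z ≠ 0 → TS p e l z = T := by
    intro z hz
    exact TS_const_of_root p e l (exists_root p e l he2 (by omega) hs0 hd0gcd hb' hpb hz)
  have hsum0 : ∑ z ∈ ({0}ᶜ : Finset (ZMod p)), psi0 p (-z) * TS p e l z = -T := by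
    have hc : ∀ z ∈ ({0}ᶜ : Finset (ZMod p)),
        psi0 p (-z) * TS p e l z = psi0 p (-z) * T := by
      intro z hz
      rw [hTS z (by simpa [Finset.mem_compl, Finset.mem_singleton] using hz)]
    rw [Finset.sum_congr rfl hc, ← Finset.sum_mul, sum_psi0_compl]
    ring
  have hPN : (p : ℂ) * (N1 : ℂ) = (p : ℂ) ^ e - T := by
    have h := pN1 p e l he
    rw [hsum0] at h
    rw [hN1]
    linear_combination h
  have hneg1 : (-1 : ZMod p) ≠ 0 := by
    haveI : Nontrivial (ZMod p) := by
      haveI : Fact (1 < p) := ⟨by omega⟩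
      infer_instance
    exact neg_ne_zero.mpr one_ne_zero
  have hTsq : T * T = (p : ℂ) ^ (2 * m + 2 * δ) := by
    have h1 := TS_mul p e l hp2 he
    rw [hR, hTS (-1) hneg1] at h1
    rw [hT] at h1 ⊢
    rw [h1, he2]
    push_cast
    rw [← pow_add]
  set TI : ℤ := (p : ℤ) ^ e - p * N1 with hTI
  have hTIC : (TI : ℂ) = T := by
    rw [hTI]
    push_cast
    linear_combination -hPN
  have hTI2 : TI ^ 2 = ((p : ℤ) ^ (m + δ)) ^ 2 := by
    have hc : ((TI : ℤ) : ℂ) ^ 2 = (((p : ℤ) ^ (m + δ) : ℤ) : ℂ) ^ 2 := by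
      rw [hTIC]
      push_cast
      rw [sq, hTsq, ← pow_mul]
      congr 1
      ring
    exact_mod_cast hc
  have hcases : TI = (p : ℤ) ^ (m + δ) ∨ TI = -(p : ℤ) ^ (m + δ) := by
    have h0 : (TI - (p : ℤ) ^ (m + δ)) * (TI + (p : ℤ) ^ (m + δ)) = 0 := by
      linear_combination hTI2
    rcases mul_eq_zero.mp h0 with h | h
    · left; linarith
    · right; linarith
  have hdvd : (p ^ s + 1) ∣ N1 := by
    rw [hN1]
    exact dvd_N1 p e l he2 (by omega) hd0gcd hb'
  have hTIneg : TI = -(p : ℤ) ^ (m + δ) := by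
    rcases hcases with hpos | hneg
    · exfalso
      obtain ⟨a, ha⟩ : ∃ a, m + δ = a + 1 := ⟨m + δ - 1, by omega⟩
      have hmd : 0 < m - δ := by
        rcases hoddδ with ⟨c, hc⟩
        have h := Nat.mul_div_cancel' hδs
        have h2 := Nat.le_mul_of_pos_right s (show 0 < (m - δ) / s by omega)
        omega
      have h3 : (p : ℤ) * (N1 : ℤ) = (p : ℤ) ^ ((a + 1) + (m - δ)) - (p : ℤ) ^ (a + 1) := by
        have h2 : (p : ℤ) ^ e - p * N1 = (p : ℤ) ^ (m + δ) := by rw [← hTI, hpos]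
        rw [he2] at h2
        rw [show (a + 1) + (m - δ) = 2 * m by omega, ← ha]
        linarith
      have hNval : (N1 : ℤ) = (p : ℤ) ^ a * ((p : ℤ) ^ (m - δ) - 1) := by
        refine mul_left_cancel₀ (show (p : ℤ) ≠ 0 by exact_mod_cast (by omega : p ≠ 0)) ?_
        rw [h3, pow_add, pow_succ]
        ring
      have hD : ((p ^ s + 1 : ℕ) : ℤ) ∣ (N1 : ℤ) := Int.natCast_dvd_natCast.mpr hdvd
      rw [hNval] at hD
      have hcop : IsCoprime ((p ^ s + 1 : ℕ) : ℤ) ((p : ℤ) ^ a) := by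
        have h6 : ¬ p ∣ (p ^ s + 1) := by
          intro hdv
          have hps : p ∣ p ^ s := dvd_pow_self p (by omega : s ≠ 0)
          have h7 : p ∣ 1 := (Nat.dvd_add_right hps).mp hdv
          have := Nat.le_of_dvd one_pos h7
          omega
        have h5 : Nat.Coprime (p ^ s + 1) (p ^ a) :=
          (((Fact.out : p.Prime).coprime_iff_not_dvd).mpr h6).symm.pow_right a
        have h8 : IsCoprime ((p ^ s + 1 : ℕ) : ℤ) ((p ^ a : ℕ) : ℤ) :=
          Int.isCoprime_iff_gcd_eq_one.mpr (by rwa [Int.gcd_natCast_natCast])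
        rwa [Nat.cast_pow] at h8
      have hD2 : ((p ^ s + 1 : ℕ) : ℤ) ∣ ((p : ℤ) ^ (m - δ) - 1) :=
        hcop.dvd_of_dvd_mul_left hD
      have hD3 : ((p ^ s + 1 : ℕ) : ℤ) ∣ ((p : ℤ) ^ (m - δ) + 1) := by
        have h9 := odd_dvd_pow_add_one (x := p) hδs hoddδ
        have h10 := Int.natCast_dvd_natCast.mpr h9
        push_cast at h10 ⊢
        exact h10
      have hD4 : ((p ^ s + 1 : ℕ) : ℤ) ∣ 2 := by
        have h11 := dvd_sub hD3 hD2
        have h12 : ((p : ℤ) ^ (m - δ) + 1) - ((p : ℤ) ^ (m - δ) - 1) = 2 := by ring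
        rwa [h12] at h11
      have h13 := Int.le_of_dvd two_pos hD4
      have h14 : 4 ≤ p ^ s + 1 := by
        have : 3 ≤ p ^ s := le_trans hp3 (Nat.le_self_pow (by omega) p)
        omega
      have h15 : ((4 : ℕ) : ℤ) ≤ ((p ^ s + 1 : ℕ) : ℤ) := by exact_mod_cast h14
      omega
    · exact hneg
  have hTC : T = -((p : ℂ) ^ (m + δ)) := by
    rw [← hTIC, hTIneg]
    push_cast
    ring
  -- final computation
  rw [psi3]
  have hz3 : ∀ z1 : ZMod p, (∑ z3 ∈ ({0}ᶜ : Finset (ZMod p)),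
      weilSum p e l (algebraMap (ZMod p) (GaloisField p e) z1)
        ((0 : GaloisField p e) * algebraMap (ZMod p) (GaloisField p e) z3))
      = ((p : ℂ) - 1) * TS p e l z1 := by
    intro z1
    have hcst : ∀ z3 ∈ ({0}ᶜ : Finset (ZMod p)),
        weilSum p e l (algebraMap (ZMod p) (GaloisField p e) z1)
          ((0 : GaloisField p e) * algebraMap (ZMod p) (GaloisField p e) z3)
        = TS p e l z1 := by
      intro z3 _
      rw [zero_mul, weil_TS]
    rw [Finset.sum_congr rfl hcst, Finset.sum_const, nsmul_eq_mul]
    congr 1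
    rw [Finset.card_compl, Finset.card_singleton, ZMod.card]
    push_cast [Nat.cast_sub (by omega : 1 ≤ p)]
    ring
  have hsummand : ∀ z1 ∈ ({0}ᶜ : Finset (ZMod p)),
      zetaP p ^ (-z1).val * (∑ z3 ∈ ({0}ᶜ : Finset (ZMod p)),
        weilSum p e l (algebraMap (ZMod p) (GaloisField p e) z1)
          ((0 : GaloisField p e) * algebraMap (ZMod p) (GaloisField p e) z3))
      = psi0 p (-z1) * (((p : ℂ) - 1) * -((p : ℂ) ^ (m + δ))) := by
    intro z1 hz1
    rw [hz3 z1, hTS z1 (by simpa [Finset.mem_compl, Finset.mem_singleton] using hz1), hTC]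
    rfl
  rw [Finset.sum_congr rfl hsummand, ← Finset.sum_mul, sum_psi0_compl]
  have hzpow : (p : ℂ) ^ ((e : ℤ) - 3) * (p : ℂ) ^ ((m + δ : ℕ)) = (p : ℂ) ^ ((e : ℤ) + m + δ - 3) := by
    rw [← zpow_natCast (p : ℂ) (m + δ), ← zpow_add₀ hp0C]
    congr 1
    push_cast
    ring
  calc ((p : ℂ) - 1) / 2 * (p : ℂ) ^ ((e : ℤ) - 3) *
        (-1 * (((p : ℂ) - 1) * -((p : ℂ) ^ (m + δ))))
      = ((p : ℂ) - 1) ^ 2 / 2 * ((p : ℂ) ^ ((e : ℤ) - 3) * (p : ℂ) ^ ((m + δ : ℕ))) := by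
        ring
  _ = ((p : ℂ) - 1) ^ 2 / 2 * (p : ℂ) ^ ((e : ℤ) + m + δ - 3) := by rw [hzpow]

end WithL
end Field
end PsiAux

/-- the value of `ψ_3(0)` (paper Lemma 9). -/
theorem psi3_zero_eval (p e l m s : ℕ) [Fact p.Prime] (hp : Odd p)
    (hl : 0 < l) (hm : 1 ≤ m) (he : e = 2 * m) (hs : s = Nat.gcd l e) (hsm : s ∣ m) :
    (Odd (m / s) →
      psi3 p e l 0 = ((p : ℂ) - 1) ^ 2 / 2 * (p : ℂ) ^ ((e : ℤ) + m - 3)) ∧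
    (Even (m / s) →
      psi3 p e l 0 = ((p : ℂ) - 1) ^ 2 / 2 * (p : ℂ) ^ ((e : ℤ) + m + s - 3)) := by
  classical
  have hp1 : 2 ≤ p := (Fact.out : p.Prime).two_le
  have hp2 : p ≠ 2 := by rcases hp with ⟨c, hc⟩; omega
  have hm0 : 0 < m := hm
  obtain ⟨hsl, hs0, hlo, hgcd2⟩ := PsiAux.struct hl hm0 (by rw [hs, he]) hsm
  have hg0 := PsiAux.gcd_pow2_sub_one (p := p) (l := l) (m := m) (s := s) hp1 hgcd2
  have hdvdt : (p ^ (2 * s) - 1) ∣ (p ^ (2 * m) - 1) :=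
    PsiAux.dvd_pow_sub_one (mul_dvd_mul_left 2 hsm)
  obtain ⟨t, htt⟩ := hdvdt
  have ht : (p ^ (2 * s) - 1) * t = p ^ (2 * m) - 1 := htt.symm
  have hparity := PsiAux.t_parity hp1 hp hs0 hsm ht
  constructor
  · intro hodd
    have hto : Odd t := hparity.mpr hodd
    have hR := PsiAux.card_R p e l hp2 he hm0 hs0 hg0 ht
    rw [if_pos hto] at hR
    have h0 := PsiAux.psi3_master p e l (m := m) (s := s) (δ := 0) hp hl hm he hs hsm
      (Nat.zero_le m) (by simpa using hsm) (by simpa using hodd)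
      (by rw [hR]; norm_num)
    rw [h0]
    norm_num
  · intro heven
    have hto : ¬ Odd t := fun h => (Nat.not_odd_iff_even.mpr heven) (hparity.mp h)
    have hR := PsiAux.card_R p e l hp2 he hm0 hs0 hg0 ht
    rw [if_neg hto] at hR
    have hδm : s ≤ m := Nat.le_of_dvd hm0 hsm
    have hδs : s ∣ (m - s) := Nat.dvd_sub hsm dvd_rfl
    have hoddδ : Odd ((m - s) / s) := by
      obtain ⟨M, hM⟩ := hsm
      subst hM
      have hMdiv : s * M / s = M := Nat.mul_div_cancel_left M hs0
      rw [hMdiv] at heven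
      have hM1 : 1 ≤ M := by
        rcases Nat.eq_zero_or_pos M with rfl | h
        · simp at hm
        · exact h
      obtain ⟨M', rfl⟩ : ∃ M', M = M' + 1 := ⟨M - 1, by omega⟩
      have h1 : s * (M' + 1) - s = s * M' := by rw [Nat.mul_succ]; omega
      rw [h1, Nat.mul_div_cancel_left M' hs0]
      rcases heven with ⟨c, hc⟩
      exact ⟨c - 1, by omega⟩
    exact PsiAux.psi3_master p e l (m := m) (s := s) (δ := s) hp hl hm he hs hsm
      hδm hδs hoddδ hR

end
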